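/- With the notation of the low rank reduction, if β = max_σ max{‖X_σ‖, ‖Y_σ^T‖} > 0 and ‖·‖ is submultiplicative, then for all k ≥ 2: (ρ_k(G,A))^k ≤ β² (ρ_{k-1}(G',A'))^{k-1} and (ρ_{k-1}(G',A'))^{k-1} ≤ β² (ρ_{k-2}(G,A))^{k-2}, where ρ_k(H,B) = max over H-admissible length-k products of ‖B_s‖^{1/k}. -/

import Mathlib

open scoped Classical
open Filter MvPolynomial Matrix

/-- The Frobenius norm, a submultiplicative matrix norm. -/
noncomputable def frob {a b : ℕ} (M : Matrix (Fin a) (Fin b) ℝ) : ℝ :=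
  Real.sqrt (∑ i, ∑ j, (M i j)^2)

/-- The set `E_k` of paths of length `k` in the labeled graph with edge set `E ⊆ V × V × L`:
sequences of `k` edges of `E` such that the target of each edge is the source of the next. -/
noncomputable def pathSet {V L : Type*} [Fintype V] [Fintype L]
    (E : Finset (V × V × L)) (k : ℕ) : Finset (Fin k → V × V × L) :=
  Finset.univ.filter (fun s =>
    (∀ i, s i ∈ E) ∧
    ∀ (i : ℕ) (h : i + 1 < k), (s ⟨i, Nat.lt_of_succ_lt h⟩).2.1 = (s ⟨i+1, h⟩).1)

/-- The sequence of labels along a path. -/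
def labels {V L : Type*} {k : ℕ} (s : Fin k → V × V × L) : Fin k → L :=
  fun i => (s i).2.2

/-- The product of matrices along a label sequence: `A_s = A_{σ_k} ⋯ A_{σ_1}`. -/
noncomputable def prodA {n : ℕ} {L : Type*} (A : L → Matrix (Fin n) (Fin n) ℝ)
    {k : ℕ} (σ : Fin k → L) : Matrix (Fin n) (Fin n) ℝ :=
  ((List.ofFn σ).reverse.map A).prod

/-- Maximum of a real-valued function over a (nonempty) finite set. -/
noncomputable def maxOver {α : Type*} (s : Finset α) (f : α → ℝ) : ℝ :=
  sSup (f '' ↑s)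

/-- Strong connectivity: every node reaches every node by a path of length ≥ 1. -/
def StronglyConnected {V L : Type*} [Fintype V] [Fintype L]
    (E : Finset (V × V × L)) : Prop :=
  ∀ u v : V, ∃ k : ℕ, ∃ s ∈ pathSet E (k+1), (s 0).1 = u ∧ (s (Fin.last k)).2.1 = v

lemma frob_nonneg {a b : ℕ} (M : Matrix (Fin a) (Fin b) ℝ) : 0 ≤ frob M :=
  Real.sqrt_nonneg _

lemma frob_mul {a b c : ℕ} (M : Matrix (Fin a) (Fin b) ℝ) (N : Matrix (Fin b) (Fin c) ℝ) :
    frob (M * N) ≤ frob M * frob N := by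
  unfold frob
  rw [← Real.sqrt_mul (by positivity)]
  apply Real.sqrt_le_sqrt
  calc ∑ i, ∑ j, ((M * N) i j)^2
      ≤ ∑ i, ∑ j, (∑ l, (M i l)^2) * (∑ l, (N l j)^2) := by
        apply Finset.sum_le_sum; intro i _
        apply Finset.sum_le_sum; intro j _
        simpa [Matrix.mul_apply] using
          Finset.sum_mul_sq_le_sq_mul_sq Finset.univ (fun l => M i l) (fun l => N l j)
    _ = (∑ i, ∑ l, (M i l)^2) * (∑ l, ∑ j, (N l j)^2) := by
        rw [← Finset.sum_mul_sum]
        congr 1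
        exact Finset.sum_comm

lemma le_maxOver {α : Type*} {s : Finset α} {f : α → ℝ} {a : α} (ha : a ∈ s) :
    f a ≤ maxOver s f :=
  le_csSup ((s.finite_toSet.image f).bddAbove) ⟨a, ha, rfl⟩

lemma maxOver_le {α : Type*} {s : Finset α} {f : α → ℝ} {c : ℝ} (hs : s.Nonempty)
    (h : ∀ a ∈ s, f a ≤ c) : maxOver s f ≤ c := by
  apply csSup_le (hs.to_set.image f)
  rintro x ⟨a, ha, rfl⟩
  exact h a ha

lemma exists_maxOver {α : Type*} {s : Finset α} {f : α → ℝ} (hs : s.Nonempty) :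
    ∃ a ∈ s, maxOver s f = f a := by
  have := Set.Nonempty.csSup_mem (hs.to_set.image f) (s.finite_toSet.image f)
  obtain ⟨a, ha, h⟩ := this
  exact ⟨a, ha, h.symm⟩

lemma prodA_zero {n : ℕ} {L : Type*} (A : L → Matrix (Fin n) (Fin n) ℝ)
    (σ : Fin 0 → L) : prodA A σ = 1 := by
  simp [prodA]

lemma prodA_one {n : ℕ} {L : Type*} (A : L → Matrix (Fin n) (Fin n) ℝ)
    (σ : Fin 1 → L) : prodA A σ = A (σ 0) := by
  simp [prodA]

lemma prodA_succ_last {n K : ℕ} {L : Type*} (A : L → Matrix (Fin n) (Fin n) ℝ)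
    (σ : Fin (K+1) → L) :
    prodA A σ = A (σ (Fin.last K)) * prodA A (fun i : Fin K => σ i.castSucc) := by
  unfold prodA
  rw [List.ofFn_succ']
  simp [List.concat_eq_append]

lemma sandwich1 {m n r : ℕ}
    (A : Fin m → Matrix (Fin n) (Fin n) ℝ)
    (X Y : Fin m → Matrix (Fin n) (Fin r) ℝ)
    (hA : ∀ σ, A σ = X σ * (Y σ)ᵀ)
    (A' : Fin m × Fin m → Matrix (Fin r) (Fin r) ℝ)
    (hA' : ∀ p : Fin m × Fin m, A' p = (Y p.1)ᵀ * X p.2) :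
    ∀ (K : ℕ) (σ : Fin (K+1) → Fin m),
      prodA A σ = X (σ (Fin.last K)) *
        prodA A' (fun i : Fin K => (σ i.succ, σ i.castSucc)) * (Y (σ 0))ᵀ := by
  intro K
  induction K with
  | zero =>
    intro σ
    rw [prodA_one, prodA_zero, hA]
    simp [Fin.last]
  | succ K ih =>
    intro σ
    rw [prodA_succ_last A σ, ih (fun i => σ i.castSucc), hA,
      prodA_succ_last A' (fun i : Fin (K+1) => (σ i.succ, σ i.castSucc))]
    have h1 : (fun i : Fin K => ((σ i.castSucc.succ : Fin m), (σ i.castSucc.castSucc : Fin m)))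
        = fun i : Fin K => (σ i.succ.castSucc, σ i.castSucc.castSucc) := by
      funext i
      rw [Fin.succ_castSucc]
    rw [hA' ((σ (Fin.last K).succ, σ (Fin.last K).castSucc))]
    simp only [Fin.succ_last]
    rw [h1]
    have h0 : (σ (0 : Fin (K+1)).castSucc) = σ 0 := rfl
    rw [h0]
    simp only [Matrix.mul_assoc]

lemma sandwich2 {m n r : ℕ}
    (A : Fin m → Matrix (Fin n) (Fin n) ℝ)
    (X Y : Fin m → Matrix (Fin n) (Fin r) ℝ)
    (hA : ∀ σ, A σ = X σ * (Y σ)ᵀ)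
    (A' : Fin m × Fin m → Matrix (Fin r) (Fin r) ℝ)
    (hA' : ∀ p : Fin m × Fin m, A' p = (Y p.1)ᵀ * X p.2) :
    ∀ (K : ℕ) (τ : Fin (K+1) → Fin m × Fin m),
      (∀ i : Fin K, (τ i.succ).2 = (τ i.castSucc).1) →
      prodA A' τ = (Y (τ (Fin.last K)).1)ᵀ *
        prodA A (fun i : Fin K => (τ i.castSucc).1) * X (τ 0).2 := by
  intro K
  induction K with
  | zero =>
    intro τ _
    rw [prodA_one, prodA_zero, hA']
    simp [Fin.last]
  | succ K ih =>
    intro τ hchain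
    have hc' : ∀ i : Fin K, ((fun j : Fin (K+1) => τ j.castSucc) i.succ).2
        = ((fun j : Fin (K+1) => τ j.castSucc) i.castSucc).1 := by
      intro i
      have := hchain i.castSucc
      simpa only [Fin.succ_castSucc] using this
    rw [prodA_succ_last A' τ, ih (fun j => τ j.castSucc) hc', hA']
    have hlast : (τ (Fin.last (K+1))).2 = (τ ((Fin.last K).castSucc)).1 := by
      have := hchain (Fin.last K)
      simpa [Fin.succ_last] using this
    have hmid : prodA A (fun i : Fin (K+1) => (τ i.castSucc).1)
        = A ((τ ((Fin.last K).castSucc)).1) *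
          prodA A (fun i : Fin K => (τ i.castSucc.castSucc).1) := by
      rw [prodA_succ_last A (fun i : Fin (K+1) => (τ i.castSucc).1)]
    rw [hmid, hA]
    have h0 : τ ((0 : Fin (K+1)).castSucc) = τ 0 := rfl
    rw [h0, hlast]
    simp only [Matrix.mul_assoc]

lemma maxOver_nonneg {α : Type*} {s : Finset α} {f : α → ℝ} (hs : s.Nonempty)
    (hf : ∀ a, 0 ≤ f a) : 0 ≤ maxOver s f := by
  obtain ⟨a, ha⟩ := hs
  exact (hf a).trans (le_maxOver ha)

lemma maxOver_rpow {α : Type*} {s : Finset α} {f : α → ℝ} (hs : s.Nonempty)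
    (hf : ∀ a, 0 ≤ f a) {c : ℝ} (hc : 0 ≤ c) :
    maxOver s (fun a => f a ^ c) = (maxOver s f) ^ c := by
  obtain ⟨a₀, ha₀, hmax⟩ := exists_maxOver (f := f) hs
  rw [hmax]
  apply le_antisymm
  · apply maxOver_le hs
    intro a ha
    exact Real.rpow_le_rpow (hf a) (hmax ▸ le_maxOver ha) hc
  · exact le_maxOver (f := fun a => f a ^ c) ha₀

lemma maxOver_pow_eq {α : Type*} {s : Finset α} {f : α → ℝ} (hs : s.Nonempty)
    (hf : ∀ a, 0 ≤ f a) {c : ℝ} (hc : 0 ≤ c) {K : ℕ} (h : c * K = 1) :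
    (maxOver s (fun a => f a ^ c))^K = maxOver s f := by
  rw [maxOver_rpow hs hf hc, ← Real.rpow_natCast ((maxOver s f) ^ c) K,
    ← Real.rpow_mul (maxOver_nonneg hs hf), h, Real.rpow_one]

lemma frob_sandwich {a b c d : ℕ} (U : Matrix (Fin a) (Fin b) ℝ) (P : Matrix (Fin b) (Fin c) ℝ)
    (W : Matrix (Fin c) (Fin d) ℝ) {β : ℝ} (hU : frob U ≤ β) (hW : frob W ≤ β) :
    frob (U * P * W) ≤ β^2 * frob P := by
  have h0 := frob_nonneg P
  have hb : 0 ≤ β := le_trans (frob_nonneg U) hU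
  calc frob (U * P * W) ≤ frob (U * P) * frob W := frob_mul _ _
    _ ≤ (frob U * frob P) * frob W := mul_le_mul_of_nonneg_right (frob_mul _ _) (frob_nonneg _)
    _ ≤ (β * frob P) * β :=
        mul_le_mul (mul_le_mul_of_nonneg_right hU h0) hW (frob_nonneg _) (by positivity)
    _ = β^2 * frob P := by ring

/-- with the notation of the low rank reduction, if
`β = max_σ max{‖X_σ‖, ‖Y_σᵀ‖} > 0` and the norm is submultiplicative (we use the
Frobenius norm), then for all `k ≥ 2`:
`(ρ_k(G,A))^k ≤ β² (ρ_{k-1}(G',A'))^{k-1}` and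
`(ρ_{k-1}(G',A'))^{k-1} ≤ β² (ρ_{k-2}(G,A))^{k-2}`,
where `ρ_k(H,B) = max_{s∈H_k} ‖B_s‖^{1/k}`.  (Stated with `k` replaced by `k+2`.) -/
theorem low_rank_finite_horizon {m n r : ℕ} (hm : 0 < m)
    (A : Fin m → Matrix (Fin n) (Fin n) ℝ)
    (X Y : Fin m → Matrix (Fin n) (Fin r) ℝ)
    (hA : ∀ σ, A σ = X σ * (Y σ)ᵀ)
    {V : Type*} [Fintype V] (E : Finset (V × V × Fin m))
    (hne : ∀ k, (pathSet E k).Nonempty)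
    (A' : Fin m × Fin m → Matrix (Fin r) (Fin r) ℝ)
    (hA' : ∀ p : Fin m × Fin m, A' p = (Y p.1)ᵀ * X p.2)
    (E' : Finset ((V × V × Fin m) × (V × V × Fin m) × (Fin m × Fin m)))
    (hE' : ∀ e f : V × V × Fin m, ∀ l : Fin m × Fin m,
      (e, f, l) ∈ E' ↔ e ∈ E ∧ f ∈ E ∧ e.2.1 = f.1 ∧ l = (f.2.2, e.2.2))
    (β : ℝ) (hβpos : 0 < β)
    (hβ : β = sSup (Set.range fun σ : Fin m => max (frob (X σ)) (frob ((Y σ)ᵀ)))) :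
    ∀ k : ℕ,
      (maxOver (pathSet E (k+2))
          (fun s => frob (prodA A (labels s)) ^ ((1:ℝ)/(k+2)))) ^ (k+2)
        ≤ β ^ 2 *
          (maxOver (pathSet E' (k+1))
            (fun s => frob (prodA A' (labels s)) ^ ((1:ℝ)/(k+1)))) ^ (k+1) ∧
      (maxOver (pathSet E' (k+1))
          (fun s => frob (prodA A' (labels s)) ^ ((1:ℝ)/(k+1)))) ^ (k+1)
        ≤ β ^ 2 *
          (maxOver (pathSet E k)
            (fun s => frob (prodA A (labels s)) ^ ((1:ℝ)/k))) ^ k := by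
  intro k
  have hβX : ∀ σ, frob (X σ) ≤ β := by
    intro σ
    rw [hβ]
    exact le_trans (le_max_left _ (frob ((Y σ)ᵀ)))
      (le_csSup ((Set.finite_range _).bddAbove) ⟨σ, rfl⟩)
  have hβY : ∀ σ, frob ((Y σ)ᵀ) ≤ β := by
    intro σ
    rw [hβ]
    exact le_trans (le_max_right (frob (X σ)) _)
      (le_csSup ((Set.finite_range _).bddAbove) ⟨σ, rfl⟩)
  -- the map from E-paths of length k+2 to E'-paths of length k+1
  set F : (Fin (k+2) → V × V × Fin m) →
      (Fin (k+1) → (V × V × Fin m) × (V × V × Fin m) × (Fin m × Fin m)) :=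
    fun s i => (s i.castSucc, s i.succ, ((s i.succ).2.2, (s i.castSucc).2.2)) with hF
  have hFmem : ∀ s ∈ pathSet E (k+2), F s ∈ pathSet E' (k+1) := by
    intro s hs
    simp only [pathSet, Finset.mem_filter, Finset.mem_univ, true_and] at hs ⊢
    obtain ⟨hs1, hs2⟩ := hs
    refine ⟨fun i => ?_, fun i h => ?_⟩
    · exact (hE' _ _ _).2 ⟨hs1 _, hs1 _, hs2 i.val (by omega), rfl⟩
    · show s _ = s _
      exact congrArg s (by ext; simp)
  obtain ⟨s₀, hs₀⟩ := hne (k+2)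
  have hne' : (pathSet E' (k+1)).Nonempty := ⟨F s₀, hFmem s₀ hs₀⟩
  -- facts about E'-paths
  have hfacts : ∀ (K : ℕ) (s' : Fin K → (V × V × Fin m) × (V × V × Fin m) × (Fin m × Fin m)),
      s' ∈ pathSet E' K → ∀ j : Fin K,
      (s' j).1 ∈ E ∧ (s' j).2.1 ∈ E ∧ (s' j).1.2.1 = (s' j).2.1.1 ∧
        (s' j).2.2 = ((s' j).2.1.2.2, (s' j).1.2.2) := by
    intro K s' hs' j
    simp only [pathSet, Finset.mem_filter, Finset.mem_univ, true_and] at hs'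
    exact (hE' _ _ _).1 (hs'.1 j)
  -- key identity and bound for inequality 1
  have key1 : ∀ s ∈ pathSet E (k+2),
      frob (prodA A (labels s)) ≤ β^2 * frob (prodA A' (labels (F s))) := by
    intro s hs
    have hid := sandwich1 A X Y hA A' hA' (k+1) (labels s)
    have : prodA A (labels s) = X (labels s (Fin.last (k+1))) *
        prodA A' (labels (F s)) * (Y (labels s 0))ᵀ := hid
    rw [this]
    exact frob_sandwich _ _ _ (hβX _) (hβY _)
  -- conversions from rpow-max-pow to max
  have h2ne : ((k:ℝ)+2) ≠ 0 := by positivity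
  have h1ne : ((k:ℝ)+1) ≠ 0 := by positivity
  have conv1 : (maxOver (pathSet E (k+2))
      (fun s => frob (prodA A (labels s)) ^ ((1:ℝ)/(k+2)))) ^ (k+2)
      = maxOver (pathSet E (k+2)) (fun s => frob (prodA A (labels s))) :=
    maxOver_pow_eq (hne _) (fun s => frob_nonneg _) (by positivity)
      (by push_cast; field_simp)
  have conv2 : (maxOver (pathSet E' (k+1))
      (fun s => frob (prodA A' (labels s)) ^ ((1:ℝ)/(k+1)))) ^ (k+1)
      = maxOver (pathSet E' (k+1)) (fun s => frob (prodA A' (labels s))) :=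
    maxOver_pow_eq hne' (fun s => frob_nonneg _) (by positivity)
      (by push_cast; field_simp)
  constructor
  · -- first inequality
    rw [conv1, conv2]
    apply maxOver_le (hne (k+2))
    intro s hs
    refine le_trans (key1 s hs) ?_
    have := le_maxOver (f := fun s' => frob (prodA A' (labels s'))) (hFmem s hs)
    exact mul_le_mul_of_nonneg_left this (by positivity)
  · -- second inequality
    rw [conv2]
    clear conv1 conv2 key1 hFmem hs₀
    cases k with
    | zero =>
      rw [pow_zero, mul_one]
      apply maxOver_le hne'
      intro s' hs'
      have hf := hfacts 1 s' hs' 0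
      have : prodA A' (labels s') = A' (labels s' 0) := prodA_one _ _
      rw [this]
      have hl : labels s' 0 = ((s' 0).2.1.2.2, (s' 0).1.2.2) := hf.2.2.2
      rw [hl, hA']
      calc frob ((Y (s' 0).2.1.2.2)ᵀ * X (s' 0).1.2.2)
          ≤ frob ((Y (s' 0).2.1.2.2)ᵀ) * frob (X (s' 0).1.2.2) := frob_mul _ _
        _ ≤ β * β := mul_le_mul (hβY _) (hβX _) (frob_nonneg _) hβpos.le
        _ = β^2 := by ring
    | succ j =>
      push_cast
      have hkne : ((j:ℝ)+1) ≠ 0 := by positivity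
      have conv3 : (maxOver (pathSet E (j+1))
          (fun s => frob (prodA A (labels s)) ^ ((1:ℝ)/(j+1)))) ^ (j+1)
          = maxOver (pathSet E (j+1)) (fun s => frob (prodA A (labels s))) :=
        maxOver_pow_eq (hne _) (fun s => frob_nonneg _) (by positivity)
          (by push_cast; field_simp)
      rw [conv3]
      apply maxOver_le hne'
      intro s' hs'
      -- chain condition
      have hs'2 : ∀ (i : ℕ) (h : i + 1 < j+1+1),
          (s' ⟨i, Nat.lt_of_succ_lt h⟩).2.1 = (s' ⟨i+1, h⟩).1 := by
        have := hs'
        simp only [pathSet, Finset.mem_filter, Finset.mem_univ, true_and] at this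
        exact this.2
      have hchain : ∀ i : Fin (j+1), ((labels s') i.succ).2 = ((labels s') i.castSucc).1 := by
        intro i
        have h1 := (hfacts _ s' hs' i.succ).2.2.2
        have h2 := (hfacts _ s' hs' i.castSucc).2.2.2
        have h3 : (s' i.castSucc).2.1 = (s' i.succ).1 := hs'2 i.val (by omega)
        show ((s' i.succ).2.2).2 = ((s' i.castSucc).2.2).1
        rw [h1, h2]
        simp only
        rw [h3]
      have hid := sandwich2 A X Y hA A' hA' (j+1) (labels s') hchain
      -- the middle path
      set s'' : Fin (j+1) → V × V × Fin m := fun i => (s' i.castSucc).2.1 with hs''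
      have hmem'' : s'' ∈ pathSet E (j+1) := by
        simp only [pathSet, Finset.mem_filter, Finset.mem_univ, true_and]
        refine ⟨fun i => (hfacts _ s' hs' i.castSucc).2.1, fun i h => ?_⟩
        have h3 : (s' (⟨i, by omega⟩ : Fin (j+2))).2.1
            = (s' (⟨i+1, by omega⟩ : Fin (j+2))).1 := hs'2 i (by omega)
        have h4 := (hfacts _ s' hs' (⟨i+1, by omega⟩ : Fin (j+2))).2.2.1
        show (s' (⟨i, by omega⟩ : Fin (j+2))).2.1.2.1
            = (s' (⟨i+1, by omega⟩ : Fin (j+2))).2.1.1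
        rw [h3]
        exact h4
      have hmidlab : (fun i : Fin (j+1) => ((labels s') i.castSucc).1) = labels s'' := by
        funext i
        have h2 := (hfacts _ s' hs' i.castSucc).2.2.2
        show ((s' i.castSucc).2.2).1 = (s' i.castSucc).2.1.2.2
        rw [h2]
      rw [hmidlab] at hid
      rw [hid]
      refine le_trans (frob_sandwich _ _ _ (hβY _) (hβX _)) ?_
      have := le_maxOver (f := fun s => frob (prodA A (labels s))) hmem''
      exact mul_le_mul_of_nonneg_left this (by positivity)
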